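/- Let T be a μ-invariant Markov kernel on E and let K* : [0, ∞) → [0, ∞] be convex with K*(0) = 0 and K*(v) ≤ v for all v ≥ 0. If TT* satisfies the K*-WPI, then T*T satisfies the K̃*-WPI with K̃*(v) := K*(v/2): for every f ∈ L²₀(μ) with 0 < ‖f‖_osc < ∞, K*((1/2)·‖f‖²_μ/‖f‖²_osc) ≤ ℰ_μ(T*T, f)/‖f‖²_osc. -/

import Mathlib

open MeasureTheory ENNReal

noncomputable section

variable {α : Type*} [MeasurableSpace α]

/-- Oscillation seminorm, valued in `[0,∞]`. -/
def oscNorm (μ : Measure α) (f : α → ℝ) : ℝ≥0∞ :=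
  essSup (fun p : α × α => ENNReal.ofReal |f p.1 - f p.2|) (μ.prod μ)

/-- The Dirichlet form `ℰ_μ(T, f) = ⟨(I − T)f, f⟩_μ`. -/
def dirichletForm (μ : Measure α) (T : Lp ℝ 2 μ →L[ℝ] Lp ℝ 2 μ) (f : Lp ℝ 2 μ) : ℝ :=
  @inner ℝ _ _ (f - T f) f

/-- `T` is the `L²(μ)` operator induced by a `μ`-invariant Markov kernel. -/
def IsMarkovOperator (μ : Measure α) (T : Lp ℝ 2 μ →L[ℝ] Lp ℝ 2 μ) : Prop :=
  ∃ K : α → Measure α, Measurable K ∧ (∀ x, IsProbabilityMeasure (K x)) ∧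
    μ.bind K = μ ∧ ∀ f : Lp ℝ 2 μ, ∀ᵐ x ∂μ, T f x = ∫ y, f y ∂(K x)

/-- `S` satisfies the `K*`-WPI. -/
def KstarWPI (μ : Measure α) (Ks : ℝ → ℝ≥0∞) (S : Lp ℝ 2 μ →L[ℝ] Lp ℝ 2 μ) : Prop :=
  ∀ f : Lp ℝ 2 μ, (∫ x, f x ∂μ) = 0 → 0 < oscNorm μ f → oscNorm μ f < ⊤ →
    Ks (‖f‖ ^ 2 / ((oscNorm μ f).toReal) ^ 2) ≤
      ENNReal.ofReal (dirichletForm μ S f / ((oscNorm μ f).toReal) ^ 2)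

/- ### Auxiliary lemmas -/

variable {μ : Measure α}

lemma kernel_null {K : α → Measure α} (hK : Measurable K) (hinv : μ.bind K = μ)
    {S : Set α} (hS : μ S = 0) : ∀ᵐ x ∂μ, K x S = 0 := by
  have hSm : MeasurableSet (toMeasurable μ S) := measurableSet_toMeasurable μ S
  have h1 : ∫⁻ x, K x (toMeasurable μ S) ∂μ = 0 := by
    rw [← Measure.bind_apply hSm hK.aemeasurable, hinv, measure_toMeasurable, hS]
  have hm : Measurable fun x => K x (toMeasurable μ S) :=
    (Measure.measurable_coe hSm).comp hK
  rw [lintegral_eq_zero_iff hm] at h1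
  filter_upwards [h1] with x hx
  exact le_antisymm (le_trans (measure_mono (subset_toMeasurable μ S)) (le_of_eq hx))
    zero_le

lemma kernel_ae {K : α → Measure α} (hK : Measurable K) (hinv : μ.bind K = μ)
    {p : α → Prop} (hp : ∀ᵐ y ∂μ, p y) :
    ∀ᵐ x ∂μ, ∀ᵐ y ∂(K x), p y := by
  filter_upwards [kernel_null hK hinv (ae_iff.mp hp)] with x hx
  exact ae_iff.mpr hx

lemma ae_prod_both [IsProbabilityMeasure μ] {p : α → Prop} (h : ∀ᵐ x ∂μ, p x) :
    ∀ᵐ q ∂(μ.prod μ), p q.1 ∧ p q.2 := by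
  set S := toMeasurable μ {x | ¬ p x} with hSdef
  have hS0 : μ S = 0 := by rw [measure_toMeasurable]; exact ae_iff.mp h
  have hSm : MeasurableSet S := measurableSet_toMeasurable _ _
  rw [ae_iff]
  refine measure_mono_null (fun q hq => ?_)
    (show (μ.prod μ) (S ×ˢ Set.univ ∪ Set.univ ×ˢ S) = 0 from ?_)
  · simp only [Set.mem_setOf_eq, not_and_or] at hq
    rcases hq with hq | hq
    · exact Or.inl ⟨subset_toMeasurable μ _ hq, Set.mem_univ _⟩
    · exact Or.inr ⟨Set.mem_univ _, subset_toMeasurable μ _ hq⟩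
  · refine le_antisymm (le_trans (measure_union_le _ _) ?_) zero_le
    rw [Measure.prod_prod, Measure.prod_prod, hS0]
    simp

lemma oscNorm_bound [IsProbabilityMeasure μ] {f : α → ℝ} (hosc : oscNorm μ f < ⊤) :
    ∃ a b : ℝ, b - a ≤ (oscNorm μ f).toReal ∧ ∀ᵐ y ∂μ, f y ∈ Set.Icc a b := by
  set Mb := oscNorm μ f with hMb
  set M := Mb.toReal with hM
  have hMbne : Mb ≠ ⊤ := hosc.ne
  have hae : ∀ᵐ q ∂(μ.prod μ), ENNReal.ofReal |f q.1 - f q.2| ≤ Mb :=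
    _root_.ae_le_essSup
  have haa : ∀ᵐ x ∂μ, ∀ᵐ y ∂μ, ENNReal.ofReal |f x - f y| ≤ Mb :=
    Measure.ae_ae_of_ae_prod hae
  obtain ⟨x₀, hx₀⟩ := haa.exists
  have hx₀' : ∀ᵐ y ∂μ, |f x₀ - f y| ≤ M := by
    filter_upwards [hx₀] with y hy
    exact (ENNReal.ofReal_le_iff_le_toReal hMbne).mp hy
  set r := f x₀ - M with hr
  have hrange : ∀ᵐ y ∂μ, f y - r ∈ Set.Icc 0 (2 * M) := by
    filter_upwards [hx₀'] with y hy
    rw [abs_le] at hy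
    constructor <;> simp only [hr] <;> linarith [hy.1, hy.2]
  set φ : α → ℝ≥0∞ := fun y => ENNReal.ofReal (f y - r) with hφ
  have hφB : ∀ᵐ y ∂μ, φ y ≤ ENNReal.ofReal (2 * M) := by
    filter_upwards [hrange] with y hy
    exact ENNReal.ofReal_le_ofReal hy.2
  set A := essInf φ μ with hA
  set B := essSup φ μ with hB
  have hBtop : B ≠ ⊤ := by
    refine ne_top_of_le_ne_top ofReal_ne_top (essSup_le_of_ae_le _ hφB)
  have hAtop : A ≠ ⊤ := by
    have hne : (ae μ).NeBot := ae_neBot.mpr (IsProbabilityMeasure.ne_zero μ)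
    exact ne_top_of_le_ne_top hBtop Filter.liminf_le_limsup
  have hkey : B ≤ A + Mb := by
    refine essSup_le_of_ae_le _ ?_
    filter_upwards [haa] with x hx
    have h2 : ∀ᵐ y ∂μ, φ x - Mb ≤ φ y := by
      filter_upwards [hx] with y hy
      rw [tsub_le_iff_right]
      calc φ x = ENNReal.ofReal (f x - r) := rfl
        _ ≤ ENNReal.ofReal ((f y - r) + |f x - f y|) := by
            apply ENNReal.ofReal_le_ofReal
            have h3 : f x - f y ≤ |f x - f y| := le_abs_self _
            linarith
        _ ≤ ENNReal.ofReal (f y - r) + ENNReal.ofReal |f x - f y| :=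
            ENNReal.ofReal_add_le
        _ ≤ φ y + Mb := add_le_add_right hy _
    have h5 := le_essInf_of_ae_le _ h2
    rw [tsub_le_iff_right] at h5
    exact h5
  refine ⟨r + A.toReal, r + B.toReal, ?_, ?_⟩
  · have : B.toReal ≤ A.toReal + M := by
      have := ENNReal.toReal_mono (by simp [ENNReal.add_ne_top, hAtop, hMbne]) hkey
      rwa [ENNReal.toReal_add hAtop hMbne] at this
    linarith
  · filter_upwards [hrange, _root_.ae_le_essSup (f:=φ), ae_essInf_le (f:=φ)] with y h1 h2 h3
    constructor
    · have : A.toReal ≤ f y - r := by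
        have h4 : A.toReal ≤ (φ y).toReal := ENNReal.toReal_mono (by simp [φ]) h3
        rwa [ENNReal.toReal_ofReal h1.1] at h4
      linarith
    · have : f y - r ≤ B.toReal := (ENNReal.ofReal_le_iff_le_toReal hBtop).mp h2
      linarith

lemma exists_trunc [IsProbabilityMeasure μ] {f : α → ℝ} (hfm : AEStronglyMeasurable f μ)
    {a b : ℝ} (hb : ∀ᵐ y ∂μ, f y ∈ Set.Icc a b) :
    ∃ h : α → ℝ, Measurable h ∧ (∀ y, h y ∈ Set.Icc a b) ∧ f =ᵐ[μ] h := by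
  have hne : (ae μ).NeBot := ae_neBot.mpr (IsProbabilityMeasure.ne_zero μ)
  obtain ⟨y₀, hy₀⟩ := hb.exists
  have hab : a ≤ b := le_trans hy₀.1 hy₀.2
  refine ⟨fun y => max a (min b (hfm.mk f y)), ?_, fun y => ?_, ?_⟩
  · exact Measurable.max measurable_const (Measurable.min measurable_const hfm.measurable_mk)
  · exact ⟨le_max_left _ _, max_le hab (min_le_left _ _)⟩
  · filter_upwards [hfm.ae_eq_mk, hb] with y h1 h2
    rw [← h1, min_eq_right h2.2, max_eq_right h2.1]

lemma integrable_of_bounded_meas {ν : Measure α} [IsProbabilityMeasure ν]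
    {h : α → ℝ} (hm : Measurable h) {a b : ℝ} (hab : ∀ y, h y ∈ Set.Icc a b) :
    Integrable h ν := by
  refine Integrable.mono' (integrable_const (max |a| |b|)) hm.aestronglyMeasurable ?_
  refine Filter.Eventually.of_forall fun y => ?_
  rw [Real.norm_eq_abs, abs_le]
  constructor
  · calc -(max |a| |b|) ≤ -|a| := by simp
      _ ≤ a := neg_abs_le a
      _ ≤ h y := (hab y).1
  · calc h y ≤ b := (hab y).2
      _ ≤ |b| := le_abs_self b
      _ ≤ max |a| |b| := le_max_right _ _

lemma kernel_mean_meas [IsProbabilityMeasure μ] {K : α → Measure α} (hK : Measurable K)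
    (hinv : μ.bind K = μ) (hKp : ∀ x, IsProbabilityMeasure (K x))
    {h : α → ℝ} (hm : Measurable h) {a b : ℝ} (hab : ∀ y, h y ∈ Set.Icc a b) :
    ∫ x, (∫ y, h y ∂(K x)) ∂μ = ∫ y, h y ∂μ := by
  have hne : (ae μ).NeBot := ae_neBot.mpr (IsProbabilityMeasure.ne_zero μ)
  obtain ⟨y₀⟩ : Nonempty α := Filter.nonempty_of_neBot (ae μ)
  have habr : a ≤ b := le_trans (hab y₀).1 (hab y₀).2
  set g : α → ℝ≥0∞ := fun y => ENNReal.ofReal (h y - a) with hg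
  have hgm : Measurable g := (hm.sub measurable_const).ennreal_ofReal
  have hgb : ∀ y, g y ≤ ENNReal.ofReal (b - a) := fun y =>
    ENNReal.ofReal_le_ofReal (by linarith [(hab y).2])
  have key : ∀ ν : Measure α, IsProbabilityMeasure ν →
      ∫ y, h y ∂ν = (∫⁻ y, g y ∂ν).toReal + a := by
    intro ν hν
    have hint : Integrable h ν := integrable_of_bounded_meas hm hab
    have h1 : ∫ y, (h y - a) ∂ν = ∫ y, h y ∂ν - a := by
      rw [integral_sub hint (integrable_const a), integral_const]
      simp
    have h2 : ∫ y, (h y - a) ∂ν = (∫⁻ y, g y ∂ν).toReal := by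
      rw [integral_eq_lintegral_of_nonneg_ae
        (Filter.Eventually.of_forall fun y => show (0:ℝ) ≤ h y - a by linarith [(hab y).1])
        (hm.sub measurable_const).aestronglyMeasurable]
    linarith
  have hF : Measurable fun x => ∫⁻ y, g y ∂(K x) :=
    (Measure.measurable_lintegral hgm).comp hK
  have hFb : ∀ x, (∫⁻ y, g y ∂(K x)) ≤ ENNReal.ofReal (b - a) := by
    intro x
    have := hKp x
    calc ∫⁻ y, g y ∂(K x) ≤ ∫⁻ _, ENNReal.ofReal (b - a) ∂(K x) := lintegral_mono hgb
      _ = ENNReal.ofReal (b - a) := by simp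
  calc ∫ x, (∫ y, h y ∂(K x)) ∂μ
      = ∫ x, ((∫⁻ y, g y ∂(K x)).toReal + a) ∂μ :=
        integral_congr_ae (Filter.Eventually.of_forall fun x => key (K x) (hKp x))
    _ = ∫ x, (∫⁻ y, g y ∂(K x)).toReal ∂μ + a := by
        rw [integral_add ?_ (integrable_const a), integral_const]
        · simp
        · refine Integrable.mono' (integrable_const (b - a))
            (hF.ennreal_toReal).aestronglyMeasurable
            (Filter.Eventually.of_forall fun x => ?_)
          rw [Real.norm_eq_abs, abs_of_nonneg ENNReal.toReal_nonneg]
          exact ENNReal.toReal_le_of_le_ofReal (by linarith) (hFb x)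
    _ = (∫⁻ x, ∫⁻ y, g y ∂(K x) ∂μ).toReal + a := by
        rw [integral_toReal hF.aemeasurable
          (Filter.Eventually.of_forall fun x => lt_of_le_of_lt (hFb x) ofReal_lt_top)]
    _ = (∫⁻ y, g y ∂μ).toReal + a := by rw [← Measure.lintegral_bind hK.aemeasurable hgm.aemeasurable, hinv]
    _ = ∫ y, h y ∂μ := (key μ inferInstance).symm

lemma kernel_integral_mem {K : α → Measure α} (hKp : ∀ x, IsProbabilityMeasure (K x))
    {h : α → ℝ} (hm : Measurable h) {a b : ℝ} (hab : ∀ y, h y ∈ Set.Icc a b) (x : α) :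
    (∫ y, h y ∂(K x)) ∈ Set.Icc a b := by
  have := hKp x
  have hint : Integrable h (K x) := integrable_of_bounded_meas hm hab
  constructor
  · calc a = ∫ _, a ∂(K x) := by simp
      _ ≤ ∫ y, h y ∂(K x) := integral_mono (integrable_const a) hint (fun y => (hab y).1)
  · calc ∫ y, h y ∂(K x) ≤ ∫ _, b ∂(K x) :=
        integral_mono hint (integrable_const b) (fun y => (hab y).2)
      _ = b := by simp

lemma ae_const_of_osc_zero [IsProbabilityMeasure μ] {g : α → ℝ} (h0 : oscNorm μ g = 0) :
    ∃ c, ∀ᵐ y ∂μ, g y = c := by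
  have hlt : oscNorm μ g < ⊤ := by rw [h0]; exact zero_lt_top
  obtain ⟨a, b, hba, hab⟩ := oscNorm_bound hlt
  rw [h0] at hba
  simp only [ENNReal.toReal_zero] at hba
  exact ⟨a, by filter_upwards [hab] with y hy; linarith [hy.1, hy.2]⟩

lemma osc_zero_of_ae_zero [IsProbabilityMeasure μ] {g : α → ℝ} (hz : ∀ᵐ y ∂μ, g y = 0) :
    oscNorm μ g = 0 := by
  refine le_antisymm ?_ zero_le
  refine essSup_le_of_ae_le _ ?_
  filter_upwards [ae_prod_both hz] with q hq
  simp [hq.1, hq.2]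

set_option maxHeartbeats 1000000

/-- if `TT*` satisfies the `K*`-WPI with a convex `K*` such that `K*(0) = 0`
and `K*(v) ≤ v`, then `T*T` satisfies the `K̃*`-WPI with `K̃*(v) = K*(v/2)`. -/
theorem stmt6
    (μ : Measure α) [IsProbabilityMeasure μ]
    (T : Lp ℝ 2 μ →L[ℝ] Lp ℝ 2 μ) (hT : IsMarkovOperator μ T)
    (Ks : ℝ → ℝ≥0∞) (hKs0 : Ks 0 = 0)
    (hKsle : ∀ v : ℝ, 0 ≤ v → Ks v ≤ ENNReal.ofReal v)
    (hKsconvex : ∀ v w t : ℝ, 0 ≤ v → 0 ≤ w → 0 ≤ t → t ≤ 1 →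
      Ks (t * v + (1 - t) * w) ≤ ENNReal.ofReal t * Ks v + ENNReal.ofReal (1 - t) * Ks w)
    (hwpi : KstarWPI μ Ks (T ∘L (ContinuousLinearMap.adjoint T))) :
    ∀ f : Lp ℝ 2 μ, (∫ x, f x ∂μ) = 0 → 0 < oscNorm μ f → oscNorm μ f < ⊤ →
      Ks ((1 / 2) * (‖f‖ ^ 2 / ((oscNorm μ f).toReal) ^ 2)) ≤
        ENNReal.ofReal
          (dirichletForm μ ((ContinuousLinearMap.adjoint T) ∘L T) f /
            ((oscNorm μ f).toReal) ^ 2) := by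
  obtain ⟨K, hK, hKp, hinv, hrep⟩ := hT
  -- convexity consequences
  have hscale : ∀ t v : ℝ, 0 ≤ t → t ≤ 1 → 0 ≤ v →
      Ks (t * v) ≤ ENNReal.ofReal t * Ks v := by
    intro t v ht ht1 hv
    have := hKsconvex v 0 t hv le_rfl ht ht1
    simpa [hKs0] using this
  have hmono : ∀ u v : ℝ, 0 ≤ u → u ≤ v → Ks u ≤ Ks v := by
    intro u v hu huv
    rcases eq_or_lt_of_le (hu.trans huv) with hv | hv
    · have hu0 : u = 0 := le_antisymm (huv.trans hv.symm.le) hu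
      rw [hu0, ← hv, hKs0]
    · have heq : u = (u / v) * v := by field_simp
      calc Ks u = Ks ((u / v) * v) := by rw [← heq]
        _ ≤ ENNReal.ofReal (u / v) * Ks v :=
            hscale _ _ (div_nonneg hu hv.le) ((div_le_one hv).mpr huv) hv.le
        _ ≤ 1 * Ks v := by
            exact mul_le_mul_left (ENNReal.ofReal_le_one.mpr ((div_le_one hv).mpr huv)) _
        _ = Ks v := one_mul _
  intro f hf0 hosc0 hoscT
  set T' := ContinuousLinearMap.adjoint T with hT'def
  set M := (oscNorm μ ⇑f).toReal with hM
  have hMpos : 0 < M := ENNReal.toReal_pos hosc0.ne' hoscT.ne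
  obtain ⟨a, b, hba, hfab⟩ := oscNorm_bound hoscT
  obtain ⟨h, hhm, hhab, hfh⟩ := exists_trunc (Lp.aestronglyMeasurable f) hfab
  set g := T f with hgdef
  have hrepg : ∀ᵐ x ∂μ, g x = ∫ y, h y ∂(K x) := by
    filter_upwards [hrep f, kernel_ae hK hinv hfh] with x h1 h2
    rw [h1]
    exact integral_congr_ae h2
  have hmean : ∫ x, g x ∂μ = 0 := by
    rw [integral_congr_ae hrepg, kernel_mean_meas hK hinv hKp hhm hhab,
      ← integral_congr_ae hfh, hf0]
  have hgb : ∀ᵐ x ∂μ, g x ∈ Set.Icc a b := by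
    filter_upwards [hrepg] with x h1
    rw [h1]
    exact kernel_integral_mem hKp hhm hhab x
  have hoscg : oscNorm μ ⇑g ≤ oscNorm μ ⇑f := by
    have h2 : oscNorm μ ⇑g ≤ ENNReal.ofReal (b - a) := by
      refine essSup_le_of_ae_le _ ?_
      filter_upwards [ae_prod_both hgb] with q hq
      apply ENNReal.ofReal_le_ofReal
      rw [abs_le]
      exact ⟨by linarith [hq.1.1, hq.2.2], by linarith [hq.1.2, hq.2.1]⟩
    calc oscNorm μ ⇑g ≤ ENNReal.ofReal (b - a) := h2
      _ ≤ ENNReal.ofReal M := ENNReal.ofReal_le_ofReal hba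
      _ = oscNorm μ ⇑f := by rw [hM, ENNReal.ofReal_toReal hoscT.ne]
  -- Hilbert space identities
  have hDf : dirichletForm μ (T' ∘L T) f = ‖f‖^2 - ‖g‖^2 := by
    simp only [dirichletForm, ContinuousLinearMap.comp_apply, hT'def]
    rw [inner_sub_left, real_inner_self_eq_norm_sq, ContinuousLinearMap.adjoint_inner_left,
      real_inner_self_eq_norm_sq]
  have hDg : dirichletForm μ (T ∘L T') g = ‖g‖^2 - ‖T' g‖^2 := by
    simp only [dirichletForm, ContinuousLinearMap.comp_apply, hT'def]
    rw [inner_sub_left, real_inner_self_eq_norm_sq, ← ContinuousLinearMap.adjoint_inner_right T,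
      real_inner_self_eq_norm_sq]
  have hCS : ‖g‖^2 ≤ ‖f‖ * ‖T' g‖ := by
    have h1 : (‖g‖:ℝ)^2 = @inner ℝ _ _ f (T' g) := by
      simp only [hT'def, hgdef]
      rw [ContinuousLinearMap.adjoint_inner_right, real_inner_self_eq_norm_sq]
    rw [h1]
    exact real_inner_le_norm _ _
  have hfpos : 0 < ‖f‖ := by
    rcases eq_or_lt_of_le (norm_nonneg f) with h0 | h0
    · exfalso
      have hfz : f = 0 := norm_eq_zero.mp h0.symm
      have hz : ∀ᵐ x ∂μ, (f : α → ℝ) x = 0 := by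
        filter_upwards [hfz ▸ Lp.coeFn_zero ℝ 2 μ] with x hx using hx
      exact hosc0.ne' (osc_zero_of_ae_zero hz)
    · exact h0
  rcases le_or_gt (‖g‖^2) (‖f‖^2 / 2) with hcase | hcase
  · -- easy case: large decay
    calc Ks ((1/2) * (‖f‖^2 / M^2))
        ≤ ENNReal.ofReal ((1/2) * (‖f‖^2 / M^2)) := hKsle _ (by positivity)
      _ ≤ ENNReal.ofReal (dirichletForm μ (T' ∘L T) f / M^2) := by
          apply ENNReal.ofReal_le_ofReal
          rw [hDf, show (1/2) * (‖f‖^2 / M^2) = (‖f‖^2 / 2) / M^2 by ring]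
          gcongr
          linarith
  · -- hard case: apply the WPI to g = T f
    have hgpos : 0 < ‖g‖ := by
      have h2 : 0 < ‖g‖^2 := lt_of_le_of_lt (div_pos (pow_pos hfpos 2) two_pos).le hcase
      nlinarith [norm_nonneg g]
    have hoscg0 : 0 < oscNorm μ ⇑g := by
      rcases eq_or_lt_of_le (zero_le : 0 ≤ oscNorm μ ⇑g) with h0 | h0
      · exfalso
        obtain ⟨c, hc⟩ := ae_const_of_osc_zero h0.symm
        have hcz : c = 0 := by
          have : ∫ x, g x ∂μ = c := by
            rw [integral_congr_ae (hc.mono fun y hy => hy)]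
            simp
          rw [this] at hmean
          exact hmean
        have hz : ∀ᵐ x ∂μ, (g : α → ℝ) x = 0 := by
          filter_upwards [hc] with x hx
          rw [hx, hcz]
        have : ‖g‖ = 0 := by
          rw [Lp.norm_def, eLpNorm_congr_ae (show ⇑g =ᵐ[μ] (fun _ => (0:ℝ)) from hz),
            eLpNorm_zero']
          simp
        exact hgpos.ne' this
      · exact h0
    set mg := (oscNorm μ ⇑g).toReal with hmg
    have hoscglt : oscNorm μ ⇑g < ⊤ := lt_of_le_of_lt hoscg hoscT
    have hmgpos : 0 < mg := ENNReal.toReal_pos hoscg0.ne' hoscglt.ne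
    have hmgM : mg ≤ M := ENNReal.toReal_mono hoscT.ne hoscg
    have hwpig := hwpi g hmean hoscg0 hoscglt
    have hDfg : dirichletForm μ (T ∘L T') g ≤ dirichletForm μ (T' ∘L T) f := by
      rw [hDf, hDg]
      nlinarith [hCS, norm_nonneg f, norm_nonneg (T' g), sq_nonneg (‖f‖ - ‖T' g‖)]
    set t := mg^2 / M^2 with ht
    have ht0 : 0 ≤ t := by positivity
    have ht1 : t ≤ 1 := by
      rw [ht, div_le_one (by positivity)]
      nlinarith [hmgM, hmgpos]
    calc Ks ((1/2) * (‖f‖^2 / M^2))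
        ≤ Ks (‖g‖^2 / M^2) := by
          refine hmono _ _ (by positivity) ?_
          rw [show (1/2) * (‖f‖^2 / M^2) = (‖f‖^2 / 2) / M^2 by ring]
          gcongr
      _ = Ks (t * (‖g‖^2 / mg^2)) := by
          congr 1
          rw [ht]
          field_simp
      _ ≤ ENNReal.ofReal t * Ks (‖g‖^2 / mg^2) := hscale t _ ht0 ht1 (by positivity)
      _ ≤ ENNReal.ofReal t * ENNReal.ofReal (dirichletForm μ (T ∘L T') g / mg^2) :=
          mul_le_mul_right hwpig _
      _ = ENNReal.ofReal (t * (dirichletForm μ (T ∘L T') g / mg^2)) :=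
          (ENNReal.ofReal_mul ht0).symm
      _ = ENNReal.ofReal (dirichletForm μ (T ∘L T') g / M^2) := by
          congr 1
          rw [ht]
          field_simp
      _ ≤ ENNReal.ofReal (dirichletForm μ (T' ∘L T) f / M^2) := by
          apply ENNReal.ofReal_le_ofReal
          gcongr

end
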